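/- Let M be a real n×n matrix and P a real symmetric positive definite n×n matrix such that Mᵀ·P·M − P is negative definite. Then every complex eigenvalue of M has modulus strictly less than 1. -/

import Mathlib

open Matrix

/-- Real part of a complex quadratic form of a real matrix. -/
lemma re_quad_form {n : ℕ} (A : Matrix (Fin n) (Fin n) ℝ) (v : Fin n → ℂ) :
    (star v ⬝ᵥ (A.map Complex.ofReal).mulVec v).re =
      (fun i => (v i).re) ⬝ᵥ A.mulVec (fun i => (v i).re) +
      (fun i => (v i).im) ⬝ᵥ A.mulVec (fun i => (v i).im) := by
  simp only [dotProduct, mulVec, Pi.star_apply, Matrix.map_apply, Finset.mul_sum]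
  rw [Complex.re_sum, ← Finset.sum_add_distrib]
  refine Finset.sum_congr rfl fun i _ => ?_
  rw [Complex.re_sum, ← Finset.sum_add_distrib]
  refine Finset.sum_congr rfl fun j _ => ?_
  simp [Complex.mul_re]

lemma star_mulVec_real {n : ℕ} (A : Matrix (Fin n) (Fin n) ℝ) (v : Fin n → ℂ) :
    star ((A.map Complex.ofReal).mulVec v) = (A.map Complex.ofReal).mulVec (star v) := by
  funext i
  simp only [Pi.star_apply, mulVec, dotProduct, Matrix.map_apply]
  rw [star_sum]
  refine Finset.sum_congr rfl fun j _ => ?_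
  simp [Complex.star_def, Complex.conj_ofReal]

theorem discrete_lyapunov_implies_schur {n : ℕ}
    (M P : Matrix (Fin n) (Fin n) ℝ)
    (hPsymm : P = Pᵀ)
    (hPpos : ∀ v : Fin n → ℝ, v ≠ 0 → 0 < v ⬝ᵥ P.mulVec v)
    (hQneg : ∀ v : Fin n → ℝ, v ≠ 0 → v ⬝ᵥ (Mᵀ * P * M - P).mulVec v < 0) :
    ∀ μ : ℂ, (M.map Complex.ofReal).charpoly.IsRoot μ → ‖μ‖ < 1 := by
  intro μ hroot
  set Mc : Matrix (Fin n) (Fin n) ℂ := M.map Complex.ofReal with hMc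
  -- from the root of the characteristic polynomial, get an eigenvector
  have hdet : (Matrix.diagonal (fun _ : Fin n => μ) - Mc).det = 0 := by
    have h := hroot
    rw [Polynomial.IsRoot, Matrix.charpoly, ← Polynomial.coe_evalRingHom,
      RingHom.map_det] at h
    convert h using 2
    funext i j
    by_cases hij : i = j <;>
      simp [charmatrix_apply, RingHom.mapMatrix_apply, Matrix.map_apply, Matrix.diagonal,
        hij, Matrix.sub_apply, hMc]
  obtain ⟨v, hv0, hv⟩ := Matrix.exists_mulVec_eq_zero_iff.mpr hdet
  have hev : Mc.mulVec v = μ • v := by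
    rw [Matrix.sub_mulVec] at hv
    have h1 : (Matrix.diagonal fun _ : Fin n => μ).mulVec v = μ • v := by
      funext i; simp [Matrix.mulVec_diagonal]
    rw [h1] at hv
    linear_combination (norm := module) -hv
  -- key identity
  set Q : Matrix (Fin n) (Fin n) ℝ := Mᵀ * P * M - P with hQ
  set Pc : Matrix (Fin n) (Fin n) ℂ := P.map Complex.ofReal with hPc
  have hmap : Q.map Complex.ofReal = (Mc)ᵀ * Pc * Mc - Pc := by
    funext i j
    simp only [hQ, hPc, hMc, Matrix.sub_apply, Matrix.map_apply, Matrix.mul_apply,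
      Matrix.transpose_apply]
    push_cast
    ring
  have hcm : (starRingEnd ℂ) μ * μ = ((‖μ‖ ^ 2 : ℝ) : ℂ) := by
    rw [← Complex.normSq_eq_conj_mul_self]
    norm_cast
    exact (Complex.sq_norm μ).symm
  have key : star v ⬝ᵥ (Q.map Complex.ofReal).mulVec v =
      ((‖μ‖ ^ 2 : ℝ) - 1 : ℂ) * (star v ⬝ᵥ Pc.mulVec v) := by
    rw [hmap, Matrix.sub_mulVec, dotProduct_sub]
    have h2 : ((Mc)ᵀ * Pc * Mc).mulVec v =
        (Mc)ᵀ.mulVec (Pc.mulVec (Mc.mulVec v)) := by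
      rw [Matrix.mulVec_mulVec, Matrix.mulVec_mulVec]
    rw [h2, Matrix.dotProduct_mulVec (star v) (Mc)ᵀ, Matrix.vecMul_transpose,
      ← star_mulVec_real M v, hev, star_smul, Matrix.mulVec_smul,
      smul_dotProduct, dotProduct_smul]
    simp only [smul_eq_mul, Complex.star_def]
    linear_combination hcm * (star v ⬝ᵥ Pc.mulVec v)
  -- take real parts
  set x : Fin n → ℝ := fun i => (v i).re with hx
  set y : Fin n → ℝ := fun i => (v i).im with hy
  have hxy : x ≠ 0 ∨ y ≠ 0 := by
    by_contra h
    push_neg at h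
    apply hv0
    funext i
    exact Complex.ext (congrFun h.1 i) (congrFun h.2 i)
  have hQre : (star v ⬝ᵥ (Q.map Complex.ofReal).mulVec v).re =
      x ⬝ᵥ Q.mulVec x + y ⬝ᵥ Q.mulVec y := re_quad_form Q v
  have hPre : (star v ⬝ᵥ Pc.mulVec v).re =
      x ⬝ᵥ P.mulVec x + y ⬝ᵥ P.mulVec y := re_quad_form P v
  have hQlt : x ⬝ᵥ Q.mulVec x + y ⬝ᵥ Q.mulVec y < 0 := by
    rcases hxy with hx0 | hy0
    · rcases eq_or_ne y 0 with hy0 | hy0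
      · have h := hQneg x hx0
        rw [hy0]
        simpa using h
      · linarith [hQneg x hx0, hQneg y hy0]
    · rcases eq_or_ne x 0 with hx0 | hx0
      · have h := hQneg y hy0
        rw [hx0]
        simpa using h
      · linarith [hQneg x hx0, hQneg y hy0]
  have hPgt : 0 < x ⬝ᵥ P.mulVec x + y ⬝ᵥ P.mulVec y := by
    rcases hxy with hx0 | hy0
    · rcases eq_or_ne y 0 with hy0 | hy0
      · have h := hPpos x hx0
        rw [hy0]
        simpa using h
      · linarith [hPpos x hx0, hPpos y hy0]
    · rcases eq_or_ne x 0 with hx0 | hx0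
      · have h := hPpos y hy0
        rw [hx0]
        simpa using h
      · linarith [hPpos x hx0, hPpos y hy0]
  have hre : x ⬝ᵥ Q.mulVec x + y ⬝ᵥ Q.mulVec y =
      (‖μ‖ ^ 2 - 1) * (x ⬝ᵥ P.mulVec x + y ⬝ᵥ P.mulVec y) := by
    rw [← hQre, ← hPre, key]
    rw [show ((‖μ‖ ^ 2 : ℝ) - 1 : ℂ) = ((‖μ‖ ^ 2 - 1 : ℝ) : ℂ) by
      push_cast; ring]
    rw [Complex.re_ofReal_mul]
  have hc : ‖μ‖ ^ 2 - 1 < 0 := by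
    by_contra h
    push_neg at h
    nlinarith
  nlinarith [norm_nonneg μ]
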